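/- Let G be a finite group with no subgroup of index 2, and suppose G is generated by elements a, b where a has order exactly 2, b has order exactly 3, and ab has order exactly n, for some integer n ≥ 7. Set t = n/2 if n is even and t = n if n is odd. Then there exist elements u, v, w of G with uvw = 1, each of order exactly t, which generate G (i.e. G is a smooth quotient of the triangle group Δ(t,t,t)). -/

import Mathlib

/-- Conjugation stability of a closure when the generators are stable. -/
private lemma conj_mem_closure_aux {G : Type*} [Group G] {s : Set G} (g : G)
    (h : ∀ x ∈ s, g * x * g⁻¹ ∈ Subgroup.closure s)
    {x : G} (hx : x ∈ Subgroup.closure s) : g * x * g⁻¹ ∈ Subgroup.closure s := by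
  have hmap : (Subgroup.closure s).map (MulAut.conj g).toMonoidHom ≤ Subgroup.closure s := by
    rw [MonoidHom.map_closure]
    refine (Subgroup.closure_le _).mpr ?_
    rintro y ⟨z, hz, rfl⟩
    simpa [MulAut.conj, mul_assoc] using h z hz
  have : (MulAut.conj g).toMonoidHom x ∈
      (Subgroup.closure s).map (MulAut.conj g).toMonoidHom :=
    Subgroup.mem_map_of_mem _ hx
  simpa [MulAut.conj, mul_assoc] using hmap this


/-- If a finite group `G` with no subgroup of index 2 is a smooth quotient of
the triangle group `Δ(2, 3, n)` with `n ≥ 7`, then `G` is a smooth quotient of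
`Δ(t, t, t)`, where `t = n/2` if `n` is even and `t = n` if `n` is odd. -/
theorem smooth_ttt_quotient_of_23n {G : Type*} [Group G] [Finite G]
    (hindex : ∀ H : Subgroup G, H.index ≠ 2)
    (a b : G) (n : ℕ) (hn : 7 ≤ n)
    (ha : orderOf a = 2) (hb : orderOf b = 3) (hab : orderOf (a * b) = n)
    (hgen : Subgroup.closure ({a, b} : Set G) = ⊤) :
    ∃ u v w : G, u * v * w = 1 ∧
      orderOf u = (if n % 2 = 0 then n / 2 else n) ∧
      orderOf v = (if n % 2 = 0 then n / 2 else n) ∧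
      orderOf w = (if n % 2 = 0 then n / 2 else n) ∧
      Subgroup.closure ({u, v, w} : Set G) = ⊤ := by
  -- basic relations
  have ha2 : a * a = 1 := by
    have := pow_orderOf_eq_one a; rw [ha, pow_two] at this; exact this
  have hb3 : b * (b * b) = 1 := by
    have := pow_orderOf_eq_one b; rw [hb, pow_succ, pow_two, mul_assoc] at this; exact this
  have hainv : a⁻¹ = a := by
    rw [inv_eq_iff_mul_eq_one]; exact ha2
  have hbinv : b⁻¹ = b * b := by
    rw [inv_eq_iff_mul_eq_one]; exact hb3
  have hA : ∀ x : G, a * (a * x) = x := fun x => by rw [← mul_assoc, ha2, one_mul]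
  have hB : ∀ x : G, b * (b * (b * x)) = x := fun x => by
    rw [← mul_assoc, ← mul_assoc, mul_assoc b b b, hb3, one_mul]
  have ht : ∀ m : ℕ, m = n → m / Nat.gcd m 2 = if n % 2 = 0 then n / 2 else n := by
    rintro m rfl
    by_cases h2 : m % 2 = 0
    · have hd : (2 : ℕ) ∣ m := Nat.dvd_of_mod_eq_zero h2
      rw [if_pos h2, Nat.gcd_eq_right hd]
    · have : Nat.gcd m 2 = 1 := (Nat.odd_iff.mpr (by omega)).coprime_two_right
      rw [if_neg h2, this, Nat.div_one]
  -- the elements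
  refine ⟨(b * a) ^ 2, (a * b) ^ 2, b⁻¹ * (a * b) ^ 2 * b, ?_, ?_, ?_, ?_, ?_⟩
  · -- product is one
    simp only [pow_two, hbinv, mul_assoc, hA, hB, ha2, hb3]
  · -- order of u
    have hba : orderOf (b * a) = n := by
      rw [← hab]
      exact SemiconjBy.orderOf_eq a (mul_assoc a b a).symm
    rw [orderOf_pow, hba, ht n rfl]
  · rw [orderOf_pow, hab, ht n rfl]
  · have hcj : SemiconjBy b⁻¹ ((a * b) ^ 2) (b⁻¹ * (a * b) ^ 2 * b) := by
      unfold SemiconjBy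
      group
    rw [← (SemiconjBy.orderOf_eq b⁻¹ hcj), orderOf_pow, hab, ht n rfl]
  · -- generation
    set K : Subgroup G :=
      Subgroup.closure {(b * a) ^ 2, (a * b) ^ 2, b⁻¹ * (a * b) ^ 2 * b} with hKdef
    have huK : (b * a) ^ 2 ∈ K := Subgroup.subset_closure (by simp)
    have hvK : (a * b) ^ 2 ∈ K := Subgroup.subset_closure (by simp)
    have hwK : b⁻¹ * (a * b) ^ 2 * b ∈ K := Subgroup.subset_closure (by simp)
    have c1 : a * ((b * a) ^ 2) * a⁻¹ = (a * b) ^ 2 := by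
      simp only [pow_two, hbinv, hainv, mul_inv_rev, mul_assoc, hA, hB, ha2, hb3, one_mul, mul_one]
    have c2 : a * ((a * b) ^ 2) * a⁻¹ = (b * a) ^ 2 := by
      simp only [pow_two, hbinv, hainv, mul_inv_rev, mul_assoc, hA, hB, ha2, hb3, one_mul, mul_one]
    have c3 : a * (b⁻¹ * (a * b) ^ 2 * b) * a⁻¹ = ((b * a) ^ 2)⁻¹ * ((a * b) ^ 2)⁻¹ := by
      simp only [pow_two, hbinv, hainv, mul_inv_rev, mul_assoc, hA, hB, ha2, hb3, one_mul, mul_one]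
    have c4 : b * ((b * a) ^ 2) * b⁻¹ = b⁻¹ * (a * b) ^ 2 * b := by
      simp only [pow_two, hbinv, hainv, mul_inv_rev, mul_assoc, hA, hB, ha2, hb3, one_mul, mul_one]
    have c5 : b * ((a * b) ^ 2) * b⁻¹ = (b * a) ^ 2 := by
      simp only [pow_two, hbinv, hainv, mul_inv_rev, mul_assoc, hA, hB, ha2, hb3, one_mul, mul_one]
    have c6 : b * (b⁻¹ * (a * b) ^ 2 * b) * b⁻¹ = (a * b) ^ 2 := by
      simp only [pow_two, hbinv, hainv, mul_inv_rev, mul_assoc, hA, hB, ha2, hb3, one_mul, mul_one]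
    have c7 : b⁻¹ * ((b * a) ^ 2) * b = (a * b) ^ 2 := by
      simp only [pow_two, hbinv, hainv, mul_inv_rev, mul_assoc, hA, hB, ha2, hb3, one_mul, mul_one]
    have c8 : b⁻¹ * ((a * b) ^ 2) * b = b⁻¹ * (a * b) ^ 2 * b := rfl
    have c9 : b⁻¹ * (b⁻¹ * (a * b) ^ 2 * b) * b = (b * a) ^ 2 := by
      simp only [pow_two, hbinv, hainv, mul_inv_rev, mul_assoc, hA, hB, ha2, hb3, one_mul, mul_one]
    have stab_a : ∀ x ∈ K, a * x * a⁻¹ ∈ K := by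
      intro x hx
      refine conj_mem_closure_aux a ?_ hx
      intro y hy
      simp only [Set.mem_insert_iff, Set.mem_singleton_iff] at hy
      rcases hy with rfl | rfl | rfl
      · rw [c1]; exact hvK
      · rw [c2]; exact huK
      · rw [c3]; exact K.mul_mem (K.inv_mem huK) (K.inv_mem hvK)
    have stab_b : ∀ x ∈ K, b * x * b⁻¹ ∈ K := by
      intro x hx
      refine conj_mem_closure_aux b ?_ hx
      intro y hy
      simp only [Set.mem_insert_iff, Set.mem_singleton_iff] at hy
      rcases hy with rfl | rfl | rfl
      · rw [c4]; exact hwK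
      · rw [c5]; exact huK
      · rw [c6]; exact hvK
    have stab_binv : ∀ x ∈ K, b⁻¹ * x * b ∈ K := by
      intro x hx
      have := conj_mem_closure_aux b⁻¹ ?_ hx
      · simpa using this
      intro y hy
      simp only [Set.mem_insert_iff, Set.mem_singleton_iff] at hy
      rcases hy with rfl | rfl | rfl
      · rw [inv_inv, c7]; exact hvK
      · rw [inv_inv, c8]; exact hwK
      · rw [inv_inv, c9]; exact huK
    have hna : a ∈ Subgroup.normalizer (K : Set G) := by
      rw [Subgroup.mem_normalizer_iff]
      intro h
      constructor
      · intro hh; exact stab_a h hh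
      · intro hh
        have h2 := stab_a _ hh
        have e : a * (a * h * a⁻¹) * a⁻¹ = h := by
          simp only [hainv, mul_assoc, hA, ha2, mul_one]
        rwa [e] at h2
    have hnb : b ∈ Subgroup.normalizer (K : Set G) := by
      rw [Subgroup.mem_normalizer_iff]
      intro h
      constructor
      · intro hh; exact stab_b h hh
      · intro hh
        have h2 := stab_binv _ hh
        have e : b⁻¹ * (b * h * b⁻¹) * b = h := by
          simp only [hbinv, mul_assoc, hB, hb3, mul_one]
        rwa [e] at h2
    have hKnormal : K.Normal := by
      rw [← Subgroup.normalizer_eq_top_iff, eq_top_iff, ← hgen]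
      refine (Subgroup.closure_le _).mpr ?_
      intro x hx
      simp only [Set.mem_insert_iff, Set.mem_singleton_iff] at hx
      simp only [SetLike.mem_coe]
      rcases hx with rfl | rfl
      · exact hna
      · exact hnb
    haveI := hKnormal
    set φ : G →* G ⧸ K := QuotientGroup.mk' K with hφdef
    have hsur : Function.Surjective φ := QuotientGroup.mk'_surjective K
    have hQgen : Subgroup.closure ({φ a, φ b} : Set (G ⧸ K)) = ⊤ := by
      rw [← Set.image_pair, ← MonoidHom.map_closure, hgen, ← MonoidHom.range_eq_map,
        MonoidHom.range_eq_top]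
      exact hsur
    have hA2 : φ a * φ a = 1 := by rw [← map_mul, ha2, map_one]
    have hB3 : φ b * (φ b * φ b) = 1 := by rw [← map_mul, ← map_mul, hb3, map_one]
    have hAinv : (φ a)⁻¹ = φ a := by rw [inv_eq_iff_mul_eq_one]; exact hA2
    have hQA : ∀ x : G ⧸ K, φ a * (φ a * x) = x := fun x => by
      rw [← mul_assoc, hA2, one_mul]
    have hVQ : φ a * φ b * (φ a * φ b) = 1 := by
      have h0 : φ ((a * b) ^ 2) = 1 := (QuotientGroup.eq_one_iff _).mpr hvK
      rw [pow_two, map_mul, map_mul] at h0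
      exact h0
    have hABA : φ a * φ b * (φ a)⁻¹ = (φ b)⁻¹ := by
      rw [hAinv]
      refine eq_inv_of_mul_eq_one_left ?_
      rw [mul_assoc]
      exact hVQ
    set P : Subgroup (G ⧸ K) := Subgroup.zpowers (φ b) with hPdef
    have hPA : φ a ∈ Subgroup.normalizer (P : Set (G ⧸ K)) := by
      rw [Subgroup.mem_normalizer_iff]
      intro h
      constructor
      · intro hh
        obtain ⟨k, hk⟩ := Subgroup.mem_zpowers_iff.mp hh
        rw [← hk, ← conj_zpow, hABA]
        exact P.zpow_mem (P.inv_mem (Subgroup.mem_zpowers _)) k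
      · intro hh
        obtain ⟨k, hk⟩ := Subgroup.mem_zpowers_iff.mp hh
        have hh2 : h = φ a * (φ b) ^ k * (φ a)⁻¹ := by
          rw [hk, hAinv]
          simp only [mul_assoc, hQA, hA2, mul_one]
        rw [hh2, ← conj_zpow, hABA]
        exact P.zpow_mem (P.inv_mem (Subgroup.mem_zpowers _)) k
    have hPnormal : P.Normal := by
      rw [← Subgroup.normalizer_eq_top_iff, eq_top_iff, ← hQgen]
      refine (Subgroup.closure_le _).mpr ?_
      intro x hx
      simp only [Set.mem_insert_iff, Set.mem_singleton_iff] at hx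
      rcases hx with rfl | rfl
      · exact hPA
      · exact Subgroup.le_normalizer (Subgroup.mem_zpowers _)
      
    haveI := hPnormal
    set ψ : (G ⧸ K) →* (G ⧸ K) ⧸ P := QuotientGroup.mk' P with hψdef
    have hψsur : Function.Surjective ψ := QuotientGroup.mk'_surjective P
    have hψB : ψ (φ b) = 1 := (QuotientGroup.eq_one_iff _).mpr (Subgroup.mem_zpowers _)
    have hQ2top : Subgroup.zpowers (ψ (φ a)) = ⊤ := by
      rw [eq_top_iff]
      have : Subgroup.closure ({ψ (φ a), ψ (φ b)} : Set ((G ⧸ K) ⧸ P)) = ⊤ := by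
        rw [← Set.image_pair, ← MonoidHom.map_closure, hQgen, ← MonoidHom.range_eq_map,
          MonoidHom.range_eq_top]
        exact hψsur
      rw [← this]
      refine (Subgroup.closure_le _).mpr ?_
      intro x hx
      simp only [Set.mem_insert_iff, Set.mem_singleton_iff] at hx
      rcases hx with rfl | rfl
      · exact Subgroup.mem_zpowers _
      · rw [hψB]; exact Subgroup.one_mem _
    have hPidx : P.index ∣ 2 := by
      have hcard : P.index = orderOf (ψ (φ a)) := by
        calc P.index = Nat.card ((G ⧸ K) ⧸ P) := rfl
          _ = Nat.card (⊤ : Subgroup ((G ⧸ K) ⧸ P)) := Subgroup.card_top.symm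
          _ = Nat.card (Subgroup.zpowers (ψ (φ a))) := by rw [hQ2top]
          _ = orderOf (ψ (φ a)) := Nat.card_zpowers _
      rw [hcard]
      refine orderOf_dvd_of_pow_eq_one ?_
      rw [pow_two, ← map_mul, hA2, map_one]
    have hPne : P.index ≠ 2 := by
      have h0 := hindex (P.comap φ)
      rwa [P.index_comap_of_surjective hsur] at h0
    have hP1 : P.index = 1 := by
      rcases (Nat.dvd_prime Nat.prime_two).mp hPidx with h0 | h0
      · exact h0
      · exact absurd h0 hPne
    have hPtop : P = ⊤ := Subgroup.index_eq_one.mp hP1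
    obtain ⟨k, hk⟩ := Subgroup.mem_zpowers_iff.mp
      (show φ a ∈ P by rw [hPtop]; exact Subgroup.mem_top _)
    have hB3' : (φ b) ^ (3 : ℕ) = 1 := by
      rw [pow_succ, pow_two, mul_assoc]; exact hB3
    have hA3 : (φ a) ^ (3 : ℕ) = 1 := by
      rw [← hk, ← zpow_natCast, ← zpow_mul, mul_comm, zpow_mul, zpow_natCast, hB3', one_zpow]
    have hA2' : (φ a) ^ (2 : ℕ) = 1 := by rw [pow_two]; exact hA2
    have hA1 : φ a = 1 := by
      have h0 : (φ a) ^ (2 : ℕ) * φ a = 1 := by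
        rw [← pow_succ]; exact hA3
      rwa [hA2', one_mul] at h0
    have hB1 : φ b = 1 := by
      have h0 : φ b * φ b = 1 := by
        have := hVQ
        simp only [hA1, one_mul] at this
        exact this
      have h1 : φ b * (φ b * φ b) = φ b := by rw [h0, mul_one]
      rw [hB3] at h1
      exact h1.symm
    rw [Subgroup.eq_top_iff']
    intro x
    have hx1 : φ x = 1 := by
      have hx : φ x ∈ (⊤ : Subgroup (G ⧸ K)) := Subgroup.mem_top _
      rw [← hQgen, hA1, hB1, Set.pair_eq_singleton, Subgroup.closure_singleton_one,
        Subgroup.mem_bot] at hx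
      exact hx
    exact (QuotientGroup.eq_one_iff x).mp hx1
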